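/- arXiv:1809.05253 — 4 statements merged into one kernel-verified Lean document; each statement's English description precedes it below -/
import Mathlib

section
/- Let D = {D_0,D_1,D_2,D_3} be a symmetric difference family of type H in a finite abelian group G with 0_G ∈ D_0 ∩ D_1 ∩ D_2 ∩ D_3, satisfying condition (d2). Then D' = {G∖D_0, G∖D_1, G∖D_2, G∖D_3} is a symmetric difference family of type H that satisfies both (d1) (no block contains 0_G) and (d2). -/
open Finset

noncomputable section

variable {G : Type*}

/-- The element of the group ring `ℤ[G]` associated to a finite subset `D ⊆ G`. -/
def grp [AddCommGroup G] [DecidableEq G] (D : Finset G) : AddMonoidAlgebra ℤ G :=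
  ∑ x ∈ D, AddMonoidAlgebra.single x 1

/-- `D^{(-1)} = {-x : x ∈ D}`. -/
def negSet [AddCommGroup G] [DecidableEq G] (D : Finset G) : Finset G :=
  D.image (fun x => -x)

/-- A subset is symmetric if `D = -D`. -/
def IsSymmetric [AddCommGroup G] [DecidableEq G] (D : Finset G) : Prop :=
  negSet D = D

/-- `G* = G \ {0}` as a finset. -/
def Gstar (G : Type*) [AddCommGroup G] [Fintype G] [DecidableEq G] : Finset G :=
  Finset.univ \ {0}

/-- A difference family of type `H`: four blocks with `λ = Σ|D_i| - |G|`. -/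
def IsTypeH [AddCommGroup G] [Fintype G] [DecidableEq G] (D : Fin 4 → Finset G) : Prop :=
  ∑ i, grp (D i) * grp (negSet (D i)) =
    ((∑ i, ((D i).card : ℤ)) - (Fintype.card G : ℤ)) • grp (Finset.univ : Finset G)
      + (Fintype.card G : ℤ) • AddMonoidAlgebra.single (0 : G) (1 : ℤ)

/-- A difference family of type `H_4^*`: four blocks with `λ = Σ|B_i| - (|G|+1)`. -/
def IsTypeH4star [AddCommGroup G] [Fintype G] [DecidableEq G] (B : Fin 4 → Finset G) : Prop :=
  ∑ i, grp (B i) * grp (negSet (B i)) =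
    ((∑ i, ((B i).card : ℤ)) - ((Fintype.card G : ℤ) + 1)) • grp (Finset.univ : Finset G)
      + ((Fintype.card G : ℤ) + 1) • AddMonoidAlgebra.single (0 : G) (1 : ℤ)

/-- A difference family of type `H_2^*`: two blocks with `λ = Σ|S_i| - (|G|+1)/2`. -/
def IsTypeH2star [AddCommGroup G] [Fintype G] [DecidableEq G] (S : Fin 2 → Finset G) : Prop :=
  ∑ i, grp (S i) * grp (negSet (S i)) =
    ((∑ i, ((S i).card : ℤ)) - ((Fintype.card G : ℤ) + 1) / 2) • grp (Finset.univ : Finset G)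
      + (((Fintype.card G : ℤ) + 1) / 2) • AddMonoidAlgebra.single (0 : G) (1 : ℤ)

/-- Condition (d3). -/
def CondD3 [AddCommGroup G] [Fintype G] [DecidableEq G] (D : Fin 4 → Finset G) : Prop :=
  grp (D 0) * grp (negSet (D 2)) + grp (D 2) * grp (negSet (D 0))
    + grp (D 1) * grp (negSet (D 3)) + grp (D 3) * grp (negSet (D 1)) =
    ((∑ i, ((D i).card : ℤ)) - (Fintype.card G : ℤ) + 1) • grp (Finset.univ : Finset G)

/-- Condition (c1). -/
def CondC1 [AddCommGroup G] [Fintype G] [DecidableEq G] (S : Fin 4 → Finset G) : Prop :=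
  grp (S 0) * grp (negSet (S 2)) + grp (S 2) * grp (negSet (S 0))
    + grp (S 1) * grp (negSet (S 3)) + grp (S 3) * grp (negSet (S 1)) =
    ((∑ i, ((S i).card : ℤ)) - (Fintype.card G : ℤ)) • grp (Finset.univ : Finset G)

/-- Condition (d2). -/
def CondD2 [AddCommGroup G] [Fintype G] [DecidableEq G] (D : Fin 4 → Finset G) : Prop :=
  ∃ E₀ E₁ : Finset G, E₀ ⊆ Gstar G ∧ E₁ ⊆ Gstar G ∧
    grp (D 0) + grp (D 1) - grp (D 2) - grp (D 3) = grp E₀ - grp (Gstar G \ E₀) ∧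
    grp (D 0) + grp (D 3) - grp (D 1) - grp (D 2) = grp E₁ - grp (Gstar G \ E₁) ∧
    IsTypeH4star ![E₀, E₁, Gstar G \ E₀, Gstar G \ E₁]

/-- A building family: eight symmetric, pairwise disjoint subsets partitioning `G*`,
satisfying (a3) and (a4). -/
def IsBuildingFamily [AddCommGroup G] [Fintype G] [DecidableEq G] (A : Fin 8 → Finset G) : Prop :=
  (∀ i, IsSymmetric (A i)) ∧
  (∀ i j, i ≠ j → Disjoint (A i) (A j)) ∧
  (Finset.univ.biUnion A = Gstar G) ∧
  IsTypeH4star ![A 0 ∪ A 1 ∪ A 6 ∪ A 7, A 2 ∪ A 3 ∪ A 4 ∪ A 5,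
    A 0 ∪ A 3 ∪ A 5 ∪ A 6, A 1 ∪ A 2 ∪ A 4 ∪ A 7] ∧
  (∑ i, grp (A i) * grp (A i)) - (∑ i, grp (A i) * grp (A (i + 4))) =
    ((Fintype.card G : ℤ) - 1) • AddMonoidAlgebra.single (0 : G) (1 : ℤ)
      + ((grp (A 0) + grp (A 1) + grp (A 2) + grp (A 3))
        - (grp (A 4) + grp (A 5) + grp (A 6) + grp (A 7)))

end

section Aux

variable {G : Type*} [AddCommGroup G] [DecidableEq G]

lemma mem_negSet {D : Finset G} {x : G} : x ∈ negSet D ↔ -x ∈ D := by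
  simp only [negSet, Finset.mem_image]
  constructor
  · rintro ⟨y, hy, rfl⟩; simpa using hy
  · intro h; exact ⟨-x, h, by simp⟩

lemma negSet_univ_sdiff [Fintype G] (A : Finset G) :
    negSet ((Finset.univ : Finset G) \ A) = (Finset.univ : Finset G) \ negSet A := by
  ext x; simp [mem_negSet, Finset.mem_sdiff]

lemma grp_univ_sdiff [Fintype G] (A : Finset G) :
    grp ((Finset.univ : Finset G) \ A) = grp (Finset.univ : Finset G) - grp A := by
  have := Finset.sum_sdiff (f := fun x : G => AddMonoidAlgebra.single x (1 : ℤ))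
    (A.subset_univ)
  unfold grp
  linear_combination this

lemma single_mul_grp_univ [Fintype G] (x : G) :
    AddMonoidAlgebra.single x (1 : ℤ) * grp (Finset.univ : Finset G) =
      grp (Finset.univ : Finset G) := by
  unfold grp
  rw [Finset.mul_sum]
  simp only [AddMonoidAlgebra.single_mul_single, one_mul]
  exact Fintype.sum_equiv (Equiv.addLeft x) _ _ (fun y => rfl)

lemma grp_mul_univ [Fintype G] (A : Finset G) :
    grp A * grp (Finset.univ : Finset G) =
      (A.card : ℤ) • grp (Finset.univ : Finset G) := by
  rw [grp, Finset.sum_mul]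
  rw [Finset.sum_congr rfl (fun x _ => single_mul_grp_univ x), Finset.sum_const]
  simp

end Aux

/-- complements of a symmetric type-`H` family containing `0` in all blocks
and satisfying (d2) give a symmetric type-`H` family satisfying (d1) and (d2). -/
theorem complement_family_satisfies_d1_d2 {G : Type*} [AddCommGroup G] [Fintype G]
    [DecidableEq G] (D : Fin 4 → Finset G)
    (hsym : ∀ i, IsSymmetric (D i)) (hH : IsTypeH D)
    (h0 : ∀ i, (0 : G) ∈ D i) (hd2 : CondD2 D) :
    (∀ i, IsSymmetric ((Finset.univ : Finset G) \ D i)) ∧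
      IsTypeH (fun i => (Finset.univ : Finset G) \ D i) ∧
      (∀ i, (0 : G) ∉ (Finset.univ : Finset G) \ D i) ∧
      CondD2 (fun i => (Finset.univ : Finset G) \ D i) := by
  have hsym' : ∀ i, IsSymmetric ((Finset.univ : Finset G) \ D i) := by
    intro i
    unfold IsSymmetric
    rw [negSet_univ_sdiff, hsym i]
  refine ⟨hsym', ?_, ?_, ?_⟩
  · -- IsTypeH of complements
    unfold IsTypeH at hH ⊢
    have hcard : ∀ i, (((Finset.univ : Finset G) \ D i).card : ℤ) =
        (Fintype.card G : ℤ) - ((D i).card : ℤ) := by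
      intro i
      rw [Finset.card_sdiff_of_subset (Finset.subset_univ _), Finset.card_univ]
      have := Finset.card_le_card (Finset.subset_univ (D i))
      rw [Finset.card_univ] at this
      push_cast [Nat.cast_sub this]
      ring
    have hUU : grp (Finset.univ : Finset G) * grp (Finset.univ : Finset G) =
        (Fintype.card G : ℤ) • grp (Finset.univ : Finset G) := by
      rw [grp_mul_univ, Finset.card_univ]
    have hdU : ∀ i, grp (D i) * grp (Finset.univ : Finset G) =
        ((D i).card : ℤ) • grp (Finset.univ : Finset G) := fun i => grp_mul_univ _
    have hneg : ∀ i, negSet ((Finset.univ : Finset G) \ D i) =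
        (Finset.univ : Finset G) \ D i := hsym'
    simp only [hneg, grp_univ_sdiff, hcard]
    simp only [IsSymmetric] at hsym
    simp only [hsym] at hH
    simp only [Fin.sum_univ_four] at hH ⊢
    simp only [zsmul_eq_mul] at hH hUU hdU ⊢
    push_cast at hH hUU hdU ⊢
    linear_combination hH + 4 * hUU - 2 * hdU 0 - 2 * hdU 1 - 2 * hdU 2 - 2 * hdU 3
  · intro i
    simp [h0 i]
  · -- CondD2
    obtain ⟨E₀, E₁, hE₀, hE₁, he0, he1, h4⟩ := hd2
    refine ⟨Gstar G \ E₀, Gstar G \ E₁, Finset.sdiff_subset, Finset.sdiff_subset, ?_, ?_, ?_⟩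
    · rw [Finset.sdiff_sdiff_self_left, Finset.inter_eq_right.mpr hE₀]
      simp only [grp_univ_sdiff]
      linear_combination -he0
    · rw [Finset.sdiff_sdiff_self_left, Finset.inter_eq_right.mpr hE₁]
      simp only [grp_univ_sdiff]
      linear_combination -he1
    · rw [Finset.sdiff_sdiff_self_left, Finset.inter_eq_right.mpr hE₀,
        Finset.sdiff_sdiff_self_left, Finset.inter_eq_right.mpr hE₁]
      unfold IsTypeH4star at h4 ⊢
      simp only [Fin.sum_univ_four, Matrix.cons_val_zero, Matrix.cons_val_one,
        Matrix.head_cons, Matrix.cons_val_two, Matrix.tail_cons, Matrix.cons_val_three] at h4 ⊢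
      simp only [zsmul_eq_mul] at h4 ⊢
      push_cast at h4 ⊢
      linear_combination h4
end

section
/- Let D = {D_0,D_1,D_2,D_3} be a symmetric difference family of type H in a finite abelian group G of order v satisfying (d2) with witness sets E_0, E_1. Then in ℤ[G]: (G + D_2 − D_0)·E_0 + (G − D_2 + D_0)·(G*∖E_0) + (G + D_1 − D_3)·E_1 + (G − D_1 + D_3)·(G*∖E_1) = (v−1)·0_G + (2v−1)·G*, where G* = G∖{0}. -/
open Finset

set_option linter.unusedSectionVars false
noncomputable section MyAux
variable {G : Type*} [AddCommGroup G] [DecidableEq G]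

lemma myTwoCancel (f g : AddMonoidAlgebra ℤ G) (h : f + f = g + g) : f = g := by
  ext x
  have h2 : (f + f).coeff x = (g + g).coeff x := by rw [h]
  rw [show ((f+f).coeff x = f.coeff x + f.coeff x) from rfl,
    show ((g+g).coeff x = g.coeff x + g.coeff x) from rfl] at h2
  omega

lemma myGrpNegSet (D : Finset G) :
    grp (negSet D) = AddMonoidAlgebra.mapDomainLinearMap ℤ ℤ (fun x : G => -x) (grp D) := by
  unfold grp negSet
  rw [Finset.sum_image (by intro x _ y _ h; exact neg_injective h)]
  rw [map_sum]
  simp [AddMonoidAlgebra.mapDomainLinearMap_single]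

variable [Fintype G]

lemma myNegSetGstar : negSet (Gstar G) = Gstar G := by
  ext x
  simp only [negSet, Gstar, Finset.mem_image, Finset.mem_sdiff, Finset.mem_univ,
    Finset.mem_singleton, true_and]
  constructor
  · rintro ⟨y, hy, rfl⟩; simpa using hy
  · intro hx; exact ⟨-x, by simpa using hx, by simp⟩

lemma myUmulSingle (g : G) :
    grp (Finset.univ : Finset G) * AddMonoidAlgebra.single g (1:ℤ) = grp Finset.univ := by
  unfold grp
  rw [Finset.sum_mul]
  simp only [AddMonoidAlgebra.single_mul_single, one_mul]
  exact Fintype.sum_equiv (Equiv.addRight g) _ _ (fun x => rfl)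

lemma myUmulU :
    grp (Finset.univ : Finset G) * grp (Finset.univ : Finset G)
      = (Fintype.card G : ℤ) • grp (Finset.univ : Finset G) := by
  conv_lhs => rw [show (grp (Finset.univ : Finset G) * grp (Finset.univ : Finset G))
    = ∑ x : G, grp (Finset.univ : Finset G) * AddMonoidAlgebra.single x (1:ℤ) from
      by rw [← Finset.mul_sum]; simp only [grp]]
  simp only [myUmulSingle]
  rw [Finset.sum_const, Finset.card_univ, natCast_zsmul]

lemma myGrpGstar : grp (Gstar G) = grp (Finset.univ : Finset G) - 1 := by
  have h : ({0} : Finset G) ⊆ Finset.univ := Finset.subset_univ _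
  have h3 : grp (Gstar G) + grp ({0} : Finset G) = grp (Finset.univ : Finset G) :=
    by simpa only [grp, Gstar] using
      Finset.sum_sdiff (f := fun x : G => AddMonoidAlgebra.single x (1:ℤ)) h
  have h4 : grp ({0} : Finset G) = 1 := by
    unfold grp
    rw [Finset.sum_singleton, ← AddMonoidAlgebra.one_def]
  rw [h4] at h3
  exact eq_sub_of_add_eq h3

lemma myGrpSdiff (E : Finset G) (hE : E ⊆ Gstar G) :
    grp (Gstar G \ E) + grp E = grp (Gstar G) := by
  unfold grp; exact Finset.sum_sdiff hE

lemma myCardGstar : (Gstar G).card = Fintype.card G - 1 := by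
  simp [Gstar, Finset.card_sdiff_of_subset (Finset.subset_univ _)]

end MyAux

/-- the identity `T₀ = (v-1)·0 + (2v-1)·G*` for symmetric type-`H` families
satisfying (d2) with witnesses `E₀, E₁`. -/
theorem T0_identity {G : Type*} [AddCommGroup G] [Fintype G] [DecidableEq G]
    (D : Fin 4 → Finset G) (E₀ E₁ : Finset G)
    (hsym : ∀ i, IsSymmetric (D i)) (hH : IsTypeH D)
    (hE₀ : E₀ ⊆ Gstar G) (hE₁ : E₁ ⊆ Gstar G)
    (h1 : grp (D 0) + grp (D 1) - grp (D 2) - grp (D 3) = grp E₀ - grp (Gstar G \ E₀))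
    (h2 : grp (D 0) + grp (D 3) - grp (D 1) - grp (D 2) = grp E₁ - grp (Gstar G \ E₁))
    (h3 : IsTypeH4star ![E₀, E₁, Gstar G \ E₀, Gstar G \ E₁]) :
    (grp (Finset.univ : Finset G) + grp (D 2) - grp (D 0)) * grp E₀
      + (grp (Finset.univ : Finset G) - grp (D 2) + grp (D 0)) * grp (Gstar G \ E₀)
      + (grp (Finset.univ : Finset G) + grp (D 1) - grp (D 3)) * grp E₁
      + (grp (Finset.univ : Finset G) - grp (D 1) + grp (D 3)) * grp (Gstar G \ E₁) =
      ((Fintype.card G : ℤ) - 1) • AddMonoidAlgebra.single (0 : G) (1 : ℤ)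
        + (2 * (Fintype.card G : ℤ) - 1) • grp (Gstar G) := by
  classical
  set σ : AddMonoidAlgebra ℤ G →+ AddMonoidAlgebra ℤ G :=
    (AddMonoidAlgebra.mapDomainLinearMap ℤ ℤ (fun x : G => -x)).toAddMonoidHom with hσdef
  have hneg : ∀ S : Finset G, grp (negSet S) = σ (grp S) := by
    intro S
    show grp (negSet S) = AddMonoidAlgebra.mapDomainLinearMap ℤ ℤ (fun x : G => -x) (grp S)
    unfold grp negSet
    rw [Finset.sum_image (by intro x _ y _ h; exact neg_injective h)]
    rw [map_sum]
    simp [AddMonoidAlgebra.mapDomainLinearMap_single]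
  have hσD : ∀ i, σ (grp (D i)) = grp (D i) := fun i => by
    rw [← hneg, hsym i]
  have hσG : σ (grp (Gstar G)) = grp (Gstar G) := by
    rw [← hneg, myNegSetGstar]
  have hb0 : grp (Gstar G \ E₀) = grp (Gstar G) - grp E₀ :=
    eq_sub_of_add_eq (myGrpSdiff E₀ hE₀)
  have hb1 : grp (Gstar G \ E₁) = grp (Gstar G) - grp E₁ :=
    eq_sub_of_add_eq (myGrpSdiff E₁ hE₁)
  have hσE₀ : σ (grp E₀) = grp E₀ := by
    apply myTwoCancel
    have hs := congrArg σ h1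
    rw [map_sub, map_sub, map_sub, map_add, hσD 0, hσD 1, hσD 2, hσD 3] at hs
    rw [hb0, map_sub, hσG] at hs
    have h1' := h1
    rw [hb0] at h1'
    rw [h1'] at hs
    linear_combination -hs
  have hσE₁ : σ (grp E₁) = grp E₁ := by
    apply myTwoCancel
    have hs := congrArg σ h2
    rw [map_sub, map_sub, map_sub, map_add, hσD 0, hσD 3, hσD 1, hσD 2] at hs
    rw [hb1, map_sub, hσG] at hs
    have h2' := h2
    rw [hb1] at h2'
    rw [h2'] at hs
    linear_combination -hs
  have hnegE₀ : grp (negSet E₀) = grp E₀ := by rw [hneg]; exact hσE₀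
  have hnegE₁ : grp (negSet E₁) = grp E₁ := by rw [hneg]; exact hσE₁
  have hnegB₀ : grp (negSet (Gstar G \ E₀)) = grp (Gstar G \ E₀) := by
    rw [hneg, hb0]
    rw [show σ (grp (Gstar G) - grp E₀) = σ (grp (Gstar G)) - σ (grp E₀) from map_sub σ _ _,
      hσG, hσE₀]
  have hnegB₁ : grp (negSet (Gstar G \ E₁)) = grp (Gstar G \ E₁) := by
    rw [hneg, hb1]
    rw [show σ (grp (Gstar G) - grp E₁) = σ (grp (Gstar G)) - σ (grp E₁) from map_sub σ _ _,
      hσG, hσE₁]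
  have hcards : (∑ i, ((![E₀, E₁, Gstar G \ E₀, Gstar G \ E₁] i).card : ℤ))
      = 2 * (Fintype.card G : ℤ) - 2 := by
    rw [Fin.sum_univ_four]
    show (E₀.card : ℤ) + E₁.card + (Gstar G \ E₀).card + (Gstar G \ E₁).card = _
    have c0 := Finset.card_sdiff_of_subset hE₀
    have c1 := Finset.card_sdiff_of_subset hE₁
    have l0 := Finset.card_le_card hE₀
    have l1 := Finset.card_le_card hE₁
    have hGs : (Gstar G).card = Fintype.card G - 1 := myCardGstar
    have hpos : 1 ≤ Fintype.card G := Fintype.card_pos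
    omega
  unfold IsTypeH4star at h3
  rw [Fin.sum_univ_four, hcards] at h3
  rw [show (![E₀, E₁, Gstar G \ E₀, Gstar G \ E₁] : Fin 4 → Finset G) 0 = E₀ from rfl,
      show (![E₀, E₁, Gstar G \ E₀, Gstar G \ E₁] : Fin 4 → Finset G) 1 = E₁ from rfl,
      show (![E₀, E₁, Gstar G \ E₀, Gstar G \ E₁] : Fin 4 → Finset G) 2 = Gstar G \ E₀ from rfl,
      show (![E₀, E₁, Gstar G \ E₀, Gstar G \ E₁] : Fin 4 → Finset G) 3 = Gstar G \ E₁ from rfl,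
      hnegE₀, hnegE₁, hnegB₀, hnegB₁] at h3
  have hU2 := myUmulU (G := G)
  have hgs := myGrpGstar (G := G)
  have hone : AddMonoidAlgebra.single (0 : G) (1 : ℤ) = 1 := (AddMonoidAlgebra.one_def).symm
  have hab : grp E₀ + grp (Gstar G \ E₀) = grp (Finset.univ : Finset G) - 1 := by
    rw [hb0, hgs]; ring
  have hcd : grp E₁ + grp (Gstar G \ E₁) = grp (Finset.univ : Finset G) - 1 := by
    rw [hb1, hgs]; ring
  rw [hone] at h3 ⊢
  rw [hgs]
  rw [zsmul_eq_mul, zsmul_eq_mul] at h3 ⊢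
  rw [zsmul_eq_mul] at hU2
  push_cast at h3 hU2 ⊢
  apply myTwoCancel
  linear_combination
    (2 * grp (Finset.univ : Finset G)
        + (grp E₀ + grp (Gstar G \ E₀) + grp (Finset.univ : Finset G) - 1)) * hab
    + (2 * grp (Finset.univ : Finset G)
        + (grp E₁ + grp (Gstar G \ E₁) + grp (Finset.univ : Finset G) - 1)) * hcd
    + (-(2 * (grp (D 2) - grp (D 0))) - (grp (D 0) + grp (D 1) - grp (D 2) - grp (D 3))
        - grp E₀ + grp (Gstar G \ E₀)) * h1
    + (-(2 * (grp (D 1) - grp (D 3))) - (grp (D 0) + grp (D 3) - grp (D 1) - grp (D 2))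
        - grp E₁ + grp (Gstar G \ E₁)) * h2
    + (-2 : ℤ) * h3 + (6 : ℤ) * hU2
end

section
/- Let G be a finite abelian group of order v. Suppose {D_0,D_1,D_2,D_3} is a symmetric difference family of type H in G satisfying (d2) (with witness sets E_0, E_1) and (d5) (|D_0|+|D_3| = |D_1|+|D_2|). With I_0 = {1,2}, I_1 = {3,4}, I_2 = {2,4}, I_3 = {1,3} ⊆ ℤ/5ℤ, define: B_0 = D_0×I_0 ∪ (G∖D_2)×I_1 ∪ (G*∖E_0)×{0}, B_1 = D_3×I_0 ∪ (G∖D_1)×I_1 ∪ (G*∖E_1)×{0}, B_2 = (G∖D_0)×I_2 ∪ D_2×I_3 ∪ E_0×{0}, B_3 = (G∖D_3)×I_2 ∪ D_1×I_3 ∪ E_1×{0}. Then {B_0,B_1,B_2,B_3} is a difference family of type H_4* in G × ℤ/5ℤ; concretely Σ_{i=0}^{3} B_i·B_i^{(−1)} = (10v−2)·0 + (5v−3)·(G×ℤ/5ℤ)* in ℤ[G×ℤ/5ℤ]. -/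
open Finset

noncomputable section ProofAux

variable {G : Type*} [AddCommGroup G] [DecidableEq G]

lemma grp_union (A B : Finset G) (h : Disjoint A B) : grp (A ∪ B) = grp A + grp B := by
  simp [grp, Finset.sum_union h]

lemma grp_sdiff (A B : Finset G) (h : B ⊆ A) : grp (A \ B) = grp A - grp B := by
  simp [grp, Finset.sum_sdiff_eq_sub h]

lemma grp_singleton (a : G) : grp ({a} : Finset G) = AddMonoidAlgebra.single a 1 := by
  simp [grp]

lemma negSet_union (A B : Finset G) : negSet (A ∪ B) = negSet A ∪ negSet B := by
  simp [negSet, Finset.image_union]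

lemma negSet_sdiff (A B : Finset G) : negSet (A \ B) = negSet A \ negSet B := by
  simp [negSet, Finset.image_sdiff _ _ neg_injective]

lemma negSet_univ [Fintype G] : negSet (Finset.univ : Finset G) = Finset.univ := by
  ext x
  simp only [negSet, Finset.mem_image, Finset.mem_univ, true_and, iff_true]
  exact ⟨-x, by simp⟩

lemma negSet_zero_singleton : negSet ({0} : Finset G) = {0} := by
  simp [negSet]

lemma negSet_Gstar [Fintype G] : negSet (Gstar G) = Gstar G := by
  rw [Gstar, negSet_sdiff, negSet_univ, negSet_zero_singleton]

lemma negSet_prod {H : Type*} [AddCommGroup H] [DecidableEq H] (A : Finset G) (S : Finset H) :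
    negSet (A ×ˢ S) = negSet A ×ˢ negSet S := by
  ext ⟨x, y⟩
  simp only [negSet, Finset.mem_image, Finset.mem_product, Prod.exists, Prod.ext_iff,
    Prod.fst_neg, Prod.snd_neg]
  aesop

omit [AddCommGroup G] [DecidableEq G] in
lemma disjoint_prod_snd {H : Type*} [DecidableEq H] {A B : Finset G} {S T : Finset H}
    (h : Disjoint S T) : Disjoint (A ×ˢ S) (B ×ˢ T) := by
  rw [Finset.disjoint_left] at h ⊢
  rintro ⟨a, s⟩ hm hm'
  exact h (Finset.mem_product.1 hm).2 (Finset.mem_product.1 hm').2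

lemma grpU_mul_single [Fintype G] (a : G) :
    grp (Finset.univ : Finset G) * AddMonoidAlgebra.single a 1 = grp Finset.univ := by
  rw [grp, Finset.sum_mul]
  simp only [AddMonoidAlgebra.single_mul_single, one_mul]
  exact Fintype.sum_equiv (Equiv.addRight a) _ _ (fun x => rfl)

lemma grpU_mul [Fintype G] (A : Finset G) :
    grp (Finset.univ : Finset G) * grp A = (A.card : ℤ) • grp (Finset.univ : Finset G) := by
  rw [show grp A = ∑ a ∈ A, AddMonoidAlgebra.single a (1:ℤ) from rfl, Finset.mul_sum]
  simp [grpU_mul_single, Finset.sum_const]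

end ProofAux
noncomputable section ProofAux2

variable {G : Type*} [AddCommGroup G] [DecidableEq G]

/-- The ring hom `ℤ[G] → ℤ[G × ℤ/5]` induced by `a ↦ (a, 0)`. -/
def phi5 (G : Type*) [AddCommGroup G] :
    AddMonoidAlgebra ℤ G →+* AddMonoidAlgebra ℤ (G × ZMod 5) :=
  AddMonoidAlgebra.mapDomainRingHom ℤ (AddMonoidHom.inl G (ZMod 5))

/-- `single ((0 : G), k) 1` in `ℤ[G × ℤ/5]`. -/
def U5 (G : Type*) [AddCommGroup G] (k : ZMod 5) : AddMonoidAlgebra ℤ (G × ZMod 5) :=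
  AddMonoidAlgebra.single ((0 : G), k) 1

lemma phi5_grp (A : Finset G) :
    phi5 G (grp A) = ∑ a ∈ A, AddMonoidAlgebra.single (a, (0 : ZMod 5)) (1 : ℤ) := by
  rw [grp, map_sum]
  refine Finset.sum_congr rfl fun a _ => ?_
  simp [phi5, AddMonoidAlgebra.mapDomainRingHom_apply, Finsupp.mapDomain_single]

lemma U5_mul (j k : ZMod 5) : U5 G j * U5 G k = U5 G (j + k) := by
  rw [U5, U5, U5, AddMonoidAlgebra.single_mul_single, Prod.mk_add_mk, add_zero, mul_one]

lemma U5_zero : U5 G 0 = 1 := by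
  rw [U5, Prod.mk_zero_zero, ← AddMonoidAlgebra.one_def]

lemma grp_prod (A : Finset G) (S : Finset (ZMod 5)) :
    grp (A ×ˢ S) = phi5 G (grp A) * ∑ s ∈ S, U5 G s := by
  rw [phi5_grp, Finset.sum_mul_sum, grp, Finset.sum_product]
  refine Finset.sum_congr rfl fun a _ => Finset.sum_congr rfl fun s _ => ?_
  rw [U5, AddMonoidAlgebra.single_mul_single, Prod.mk_add_mk, add_zero, zero_add, mul_one]

section RingLemmas
variable {R : Type*} [CommRing R]

lemma ringI (d0 d1 d2 d3 e0 e1 g n0 n1 n2 n3 v : R)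
    (hgd0 : g*d0 = n0*g) (hgd1 : g*d1 = n1*g) (hgd2 : g*d2 = n2*g) (hgd3 : g*d3 = n3*g)
    (hgg : g*g = v*g)
    (hS : d0*d0+d1*d1+d2*d2+d3*d3 = (n0+n1+n2+n3-v)*g + v)
    (h1 : d0+d1-d2-d3 = 2*e0 - g + 1)
    (h2 : d0+d3-d1-d2 = 2*e1 - g + 1)
    (h3 : e0*e0+e1*e1+(g-1-e0)*(g-1-e0)+(g-1-e1)*(g-1-e1) = (v-3)*g + (v+1)) :
    2*((d0*d0+(g-d2)*(g-d2)+d3*d3+(g-d1)*(g-d1)) + ((g-d0)*(g-d0)+d2*d2+(g-d3)*(g-d3)+d1*d1))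
      + ((g-1-e0)*(g-1-e0)+(g-1-e1)*(g-1-e1)) + (e0*e0+e1*e1) = (5*v-3)*g + (5*v+1) := by
  linear_combination 4*hS + h3 - 4*hgd0 - 4*hgd1 - 4*hgd2 - 4*hgd3 + 8*hgg

lemma ringII (d0 d1 d2 d3 e0 e1 g n0 n1 n2 n3 v : R)
    (hgd0 : g*d0 = n0*g) (hgd1 : g*d1 = n1*g) (hgd2 : g*d2 = n2*g) (hgd3 : g*d3 = n3*g)
    (hgg : g*g = v*g)
    (hS : d0*d0+d1*d1+d2*d2+d3*d3 = (n0+n1+n2+n3-v)*g + v)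
    (h1 : d0+d1-d2-d3 = 2*e0 - g + 1)
    (h2 : d0+d3-d1-d2 = 2*e1 - g + 1)
    (h3 : e0*e0+e1*e1+(g-1-e0)*(g-1-e0)+(g-1-e1)*(g-1-e1) = (v-3)*g + (v+1)) :
    (d0*d0+(g-d2)*(g-d2)+d3*d3+(g-d1)*(g-d1)) + (d0*(g-d2)+d3*(g-d1))
      + 3*((g-d0)*d2+(g-d3)*d1)
      + ((g-1-e0)*(d0+(g-d2))+(g-1-e1)*(d3+(g-d1)))
      + (e0*((g-d0)+d2)+e1*((g-d3)+d1)) = (5*v-3)*g := by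
  linear_combination hgd0 + hgd1 + hgd2 + hgd3 + 3*hgg + (2*d0-2*d2+e0-e1)*h1
    + (1-2*d1+2*d3+e0+e1-g)*h2 - hS + h3

lemma ringIII (d0 d1 d2 d3 e0 e1 g n0 n1 n2 n3 v : R)
    (hgd0 : g*d0 = n0*g) (hgd1 : g*d1 = n1*g) (hgd2 : g*d2 = n2*g) (hgd3 : g*d3 = n3*g)
    (hgg : g*g = v*g)
    (hS : d0*d0+d1*d1+d2*d2+d3*d3 = (n0+n1+n2+n3-v)*g + v)
    (h1 : d0+d1-d2-d3 = 2*e0 - g + 1)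
    (h2 : d0+d3-d1-d2 = 2*e1 - g + 1)
    (h3 : e0*e0+e1*e1+(g-1-e0)*(g-1-e0)+(g-1-e1)*(g-1-e1) = (v-3)*g + (v+1)) :
    3*(d0*(g-d2)+d3*(g-d1)) + ((g-d0)*(g-d0)+d2*d2+(g-d3)*(g-d3)+d1*d1)
      + ((g-d0)*d2+(g-d3)*d1)
      + ((g-1-e0)*(d0+(g-d2))+(g-1-e1)*(d3+(g-d1)))
      + (e0*((g-d0)+d2)+e1*((g-d3)+d1)) = (5*v-3)*g := by
  linear_combination hgd0 + hgd1 + hgd2 + hgd3 + 3*hgg + (2*d0-2*d2+e0-e1)*h1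
    + (1-2*d1+2*d3+e0+e1-g)*h2 - hS + h3

lemma assembleR (a0 b0 c0 a1 b1 c1 a2 b2 c2 a3 b3 c3 g v u1 u2 u3 u4 : R)
    (h11 : u1*u1 = u2) (h12 : u1*u2 = u3) (h13 : u1*u3 = u4) (h14 : u1*u4 = 1)
    (h22 : u2*u2 = u4) (h23 : u2*u3 = 1) (h24 : u2*u4 = u1)
    (h33 : u3*u3 = u1) (h34 : u3*u4 = u2) (h44 : u4*u4 = u3)
    (eqI : 2*((a0*a0+b0*b0+a1*a1+b1*b1) + (a2*a2+b2*b2+a3*a3+b3*b3))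
        + (c0*c0+c1*c1) + (c2*c2+c3*c3) = (5*v-3)*g + (5*v+1))
    (eqII : (a0*a0+b0*b0+a1*a1+b1*b1) + (a0*b0+a1*b1) + 3*(a2*b2+a3*b3)
        + (c0*(a0+b0)+c1*(a1+b1)) + (c2*(a2+b2)+c3*(a3+b3)) = (5*v-3)*g)
    (eqIII : 3*(a0*b0+a1*b1) + (a2*a2+b2*b2+a3*a3+b3*b3) + (a2*b2+a3*b3)
        + (c0*(a0+b0)+c1*(a1+b1)) + (c2*(a2+b2)+c3*(a3+b3)) = (5*v-3)*g) :
    (a0*(u1+u2)+b0*(u3+u4)+c0)*(a0*(u3+u4)+b0*(u1+u2)+c0)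
      + (a1*(u1+u2)+b1*(u3+u4)+c1)*(a1*(u3+u4)+b1*(u1+u2)+c1)
      + (a2*(u2+u4)+b2*(u1+u3)+c2)*(a2*(u1+u3)+b2*(u2+u4)+c2)
      + (a3*(u2+u4)+b3*(u1+u3)+c3)*(a3*(u1+u3)+b3*(u2+u4)+c3)
      = (10*v-2)*1 + (5*v-3)*(g*(1+u1+u2+u3+u4) - 1) := by
  have A2 := a0*a0+b0*b0+a1*a1+b1*b1
  linear_combination eqI + (u1+u4)*eqII + (u2+u3)*eqIII
    + ((a0*a0+b0*b0+a1*a1+b1*b1) + 2*(a2*b2+a3*b3))*h13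
    + ((a0*a0+b0*b0+a1*a1+b1*b1) + (a2*a2+b2*b2+a3*a3+b3*b3))*h14
    + ((a0*a0+b0*b0+a1*a1+b1*b1) + (a2*a2+b2*b2+a3*a3+b3*b3))*h23
    + ((a0*a0+b0*b0+a1*a1+b1*b1) + 2*(a2*b2+a3*b3))*h24
    + ((a0*b0+a1*b1) + (a2*b2+a3*b3))*h11
    + (2*(a0*b0+a1*b1) + (a2*a2+b2*b2+a3*a3+b3*b3))*h12
    + ((a0*b0+a1*b1) + (a2*b2+a3*b3))*h22
    + ((a0*b0+a1*b1) + (a2*b2+a3*b3))*h33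
    + (2*(a0*b0+a1*b1) + (a2*a2+b2*b2+a3*a3+b3*b3))*h34
    + ((a0*b0+a1*b1) + (a2*b2+a3*b3))*h44

end RingLemmas
end ProofAux2
noncomputable section ProofAux3

variable {G : Type*} [AddCommGroup G] [DecidableEq G]

lemma grp_block [Fintype G] (A B C : Finset G) (S T : Finset (ZMod 5)) (hST : Disjoint S T)
    (hS0 : (0:ZMod 5) ∉ S) (hT0 : (0:ZMod 5) ∉ T) :
    grp (A ×ˢ S ∪ B ×ˢ T ∪ C ×ˢ {0}) =
      phi5 G (grp A) * (∑ s ∈ S, U5 G s) + phi5 G (grp B) * (∑ s ∈ T, U5 G s)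
        + phi5 G (grp C) := by
  rw [grp_union _ _ (Finset.disjoint_union_left.2
      ⟨disjoint_prod_snd (Finset.disjoint_singleton_right.2 hS0),
       disjoint_prod_snd (Finset.disjoint_singleton_right.2 hT0)⟩),
    grp_union _ _ (disjoint_prod_snd hST), grp_prod, grp_prod, grp_prod,
    Finset.sum_singleton, U5_zero, mul_one]

lemma negSet_block (A B C : Finset G) (S T : Finset (ZMod 5))
    (hA : negSet A = A) (hB : negSet B = B) (hC : negSet C = C) :
    negSet (A ×ˢ S ∪ B ×ˢ T ∪ C ×ˢ {0}) =
      A ×ˢ negSet S ∪ B ×ˢ negSet T ∪ C ×ˢ {0} := by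
  rw [negSet_union, negSet_union, negSet_prod, negSet_prod, negSet_prod, hA, hB, hC,
    negSet_zero_singleton]

lemma card_block (A B C : Finset G) (S T : Finset (ZMod 5)) (hST : Disjoint S T)
    (hS0 : (0:ZMod 5) ∉ S) (hT0 : (0:ZMod 5) ∉ T) :
    (A ×ˢ S ∪ B ×ˢ T ∪ C ×ˢ {0}).card = A.card * S.card + B.card * T.card + C.card := by
  rw [Finset.card_union_of_disjoint (Finset.disjoint_union_left.2
      ⟨disjoint_prod_snd (Finset.disjoint_singleton_right.2 hS0),
       disjoint_prod_snd (Finset.disjoint_singleton_right.2 hT0)⟩),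
    Finset.card_union_of_disjoint (disjoint_prod_snd hST),
    Finset.card_product, Finset.card_product, Finset.card_product,
    Finset.card_singleton, mul_one]

lemma card_compl_int [Fintype G] (A : Finset G) :
    (((Finset.univ : Finset G) \ A).card : ℤ) = (Fintype.card G : ℤ) - A.card := by
  rw [Finset.card_sdiff_of_subset (Finset.subset_univ A), Finset.card_univ, Nat.cast_sub (by simpa using Finset.card_le_univ A)]


lemma card_Gstar_int [Fintype G] : ((Gstar G).card : ℤ) = (Fintype.card G : ℤ) - 1 := by
  rw [Gstar, Finset.card_sdiff_of_subset (Finset.singleton_subset_iff.2 (Finset.mem_univ 0)),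
    Finset.card_singleton, Finset.card_univ, Nat.cast_sub Fintype.card_pos, Nat.cast_one]

lemma card_Gstar_sdiff_int [Fintype G] {E : Finset G} (hE : E ⊆ Gstar G) :
    ((Gstar G \ E).card : ℤ) = (Fintype.card G : ℤ) - 1 - E.card := by
  rw [Finset.card_sdiff_of_subset hE, Nat.cast_sub (Finset.card_le_card hE), card_Gstar_int]

end ProofAux3
set_option maxHeartbeats 1000000 in
/-- product construction with `ℤ/5ℤ` from a symmetric type-`H` family
satisfying (d2) (with symmetric witnesses `E₀, E₁`) and (d5). -/
theorem product_construction_Z5 {G : Type*} [AddCommGroup G] [Fintype G] [DecidableEq G]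
    (D : Fin 4 → Finset G) (E₀ E₁ : Finset G)
    (hsym : ∀ i, IsSymmetric (D i)) (hH : IsTypeH D)
    (hE₀s : IsSymmetric E₀) (hE₁s : IsSymmetric E₁)
    (hE₀ : E₀ ⊆ Gstar G) (hE₁ : E₁ ⊆ Gstar G)
    (h1 : grp (D 0) + grp (D 1) - grp (D 2) - grp (D 3) = grp E₀ - grp (Gstar G \ E₀))
    (h2 : grp (D 0) + grp (D 3) - grp (D 1) - grp (D 2) = grp E₁ - grp (Gstar G \ E₁))
    (h3 : IsTypeH4star ![E₀, E₁, Gstar G \ E₀, Gstar G \ E₁])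
    (hd5 : (D 0).card + (D 3).card = (D 1).card + (D 2).card) :
    IsTypeH4star (G := G × ZMod 5)
      ![(D 0) ×ˢ ({1, 2} : Finset (ZMod 5)) ∪ ((Finset.univ : Finset G) \ D 2) ×ˢ {3, 4}
          ∪ (Gstar G \ E₀) ×ˢ {0},
        (D 3) ×ˢ ({1, 2} : Finset (ZMod 5)) ∪ ((Finset.univ : Finset G) \ D 1) ×ˢ {3, 4}
          ∪ (Gstar G \ E₁) ×ˢ {0},
        ((Finset.univ : Finset G) \ D 0) ×ˢ ({2, 4} : Finset (ZMod 5)) ∪ (D 2) ×ˢ {1, 3}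
          ∪ E₀ ×ˢ {0},
        ((Finset.univ : Finset G) \ D 3) ×ˢ ({2, 4} : Finset (ZMod 5)) ∪ (D 1) ×ˢ {1, 3}
          ∪ E₁ ×ˢ {0}] ∧
      ∑ i, grp ((![(D 0) ×ˢ ({1, 2} : Finset (ZMod 5)) ∪ ((Finset.univ : Finset G) \ D 2) ×ˢ {3, 4}
          ∪ (Gstar G \ E₀) ×ˢ {0},
        (D 3) ×ˢ ({1, 2} : Finset (ZMod 5)) ∪ ((Finset.univ : Finset G) \ D 1) ×ˢ {3, 4}
          ∪ (Gstar G \ E₁) ×ˢ {0},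
        ((Finset.univ : Finset G) \ D 0) ×ˢ ({2, 4} : Finset (ZMod 5)) ∪ (D 2) ×ˢ {1, 3}
          ∪ E₀ ×ˢ {0},
        ((Finset.univ : Finset G) \ D 3) ×ˢ ({2, 4} : Finset (ZMod 5)) ∪ (D 1) ×ˢ {1, 3}
          ∪ E₁ ×ˢ {0}]) i) *
        grp (negSet ((![(D 0) ×ˢ ({1, 2} : Finset (ZMod 5)) ∪ ((Finset.univ : Finset G) \ D 2) ×ˢ {3, 4}
          ∪ (Gstar G \ E₀) ×ˢ {0},
        (D 3) ×ˢ ({1, 2} : Finset (ZMod 5)) ∪ ((Finset.univ : Finset G) \ D 1) ×ˢ {3, 4}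
          ∪ (Gstar G \ E₁) ×ˢ {0},
        ((Finset.univ : Finset G) \ D 0) ×ˢ ({2, 4} : Finset (ZMod 5)) ∪ (D 2) ×ˢ {1, 3}
          ∪ E₀ ×ˢ {0},
        ((Finset.univ : Finset G) \ D 3) ×ˢ ({2, 4} : Finset (ZMod 5)) ∪ (D 1) ×ˢ {1, 3}
          ∪ E₁ ×ˢ {0}]) i)) =
      (10 * (Fintype.card G : ℤ) - 2) • AddMonoidAlgebra.single (0 : G × ZMod 5) (1 : ℤ)
        + (5 * (Fintype.card G : ℤ) - 3) • grp (Gstar (G × ZMod 5)) := by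
  classical
  have hsym' : ∀ i, negSet (D i) = D i := hsym
  have hE₀s' : negSet E₀ = E₀ := hE₀s
  have hE₁s' : negSet E₁ = E₁ := hE₁s
  have hnc : ∀ i, negSet ((Finset.univ : Finset G) \ D i) = (Finset.univ : Finset G) \ D i := by
    intro i; rw [negSet_sdiff, negSet_univ, hsym' i]
  have hns0 : negSet (Gstar G \ E₀) = Gstar G \ E₀ := by
    rw [negSet_sdiff, negSet_Gstar, hE₀s']
  have hns1 : negSet (Gstar G \ E₁) = Gstar G \ E₁ := by
    rw [negSet_sdiff, negSet_Gstar, hE₁s']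
  have hgstar : grp (Gstar G) = grp (Finset.univ : Finset G) - 1 := by
    rw [Gstar, grp_sdiff _ _ (Finset.singleton_subset_iff.2 (Finset.mem_univ 0)), grp_singleton,
      ← AddMonoidAlgebra.one_def]
  have hsd0 : grp (Gstar G \ E₀) = grp (Finset.univ : Finset G) - 1 - grp E₀ := by
    rw [grp_sdiff _ _ hE₀, hgstar]
  have hsd1 : grp (Gstar G \ E₁) = grp (Finset.univ : Finset G) - 1 - grp E₁ := by
    rw [grp_sdiff _ _ hE₁, hgstar]
  have hgd : ∀ A : Finset G, grp (Finset.univ : Finset G) * grp A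
      = (A.card : AddMonoidAlgebra ℤ G) * grp (Finset.univ : Finset G) := by
    intro A; rw [grpU_mul, zsmul_eq_mul]; push_cast; ring
  have hgg : grp (Finset.univ : Finset G) * grp (Finset.univ : Finset G)
      = (Fintype.card G : AddMonoidAlgebra ℤ G) * grp (Finset.univ : Finset G) := by
    rw [hgd, Finset.card_univ]
  have hS' : grp (D 0)*grp (D 0)+grp (D 1)*grp (D 1)+grp (D 2)*grp (D 2)+grp (D 3)*grp (D 3)
      = (((D 0).card : AddMonoidAlgebra ℤ G)+((D 1).card : AddMonoidAlgebra ℤ G)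
          +((D 2).card : AddMonoidAlgebra ℤ G)+((D 3).card : AddMonoidAlgebra ℤ G)
          -(Fintype.card G : AddMonoidAlgebra ℤ G)) * grp (Finset.univ : Finset G)
        + (Fintype.card G : AddMonoidAlgebra ℤ G) := by
    have h := hH
    unfold IsTypeH at h
    rw [Fin.sum_univ_four, Fin.sum_univ_four, hsym' 0, hsym' 1, hsym' 2, hsym' 3,
      ← AddMonoidAlgebra.one_def] at h
    simp only [zsmul_eq_mul] at h
    push_cast at h
    linear_combination h
  have h1' : grp (D 0)+grp (D 1)-grp (D 2)-grp (D 3)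
      = 2*grp E₀ - grp (Finset.univ : Finset G) + 1 := by
    rw [hsd0] at h1; linear_combination h1
  have h2' : grp (D 0)+grp (D 3)-grp (D 1)-grp (D 2)
      = 2*grp E₁ - grp (Finset.univ : Finset G) + 1 := by
    rw [hsd1] at h2; linear_combination h2
  have h3' : grp E₀*grp E₀+grp E₁*grp E₁
      +(grp (Finset.univ : Finset G)-1-grp E₀)*(grp (Finset.univ : Finset G)-1-grp E₀)
      +(grp (Finset.univ : Finset G)-1-grp E₁)*(grp (Finset.univ : Finset G)-1-grp E₁)
      = ((Fintype.card G : AddMonoidAlgebra ℤ G)-3) * grp (Finset.univ : Finset G)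
        + ((Fintype.card G : AddMonoidAlgebra ℤ G)+1) := by
    have h := h3
    unfold IsTypeH4star at h
    simp only [Fin.sum_univ_four, Matrix.cons_val_zero, Matrix.cons_val_one, Matrix.head_cons,
      Matrix.cons_val_two, Matrix.tail_cons, Matrix.cons_val_three] at h
    rw [hE₀s', hE₁s', hns0, hns1, hsd0, hsd1, ← AddMonoidAlgebra.one_def,
      card_Gstar_sdiff_int hE₀, card_Gstar_sdiff_int hE₁] at h
    simp only [zsmul_eq_mul] at h
    push_cast at h
    linear_combination h
  have EI := ringI (grp (D 0)) (grp (D 1)) (grp (D 2)) (grp (D 3)) (grp E₀) (grp E₁)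
    (grp (Finset.univ : Finset G)) ((D 0).card) ((D 1).card) ((D 2).card) ((D 3).card)
    (Fintype.card G) (hgd (D 0)) (hgd (D 1)) (hgd (D 2)) (hgd (D 3)) hgg hS' h1' h2' h3'
  have EII := ringII (grp (D 0)) (grp (D 1)) (grp (D 2)) (grp (D 3)) (grp E₀) (grp E₁)
    (grp (Finset.univ : Finset G)) ((D 0).card) ((D 1).card) ((D 2).card) ((D 3).card)
    (Fintype.card G) (hgd (D 0)) (hgd (D 1)) (hgd (D 2)) (hgd (D 3)) hgg hS' h1' h2' h3'
  have EIII := ringIII (grp (D 0)) (grp (D 1)) (grp (D 2)) (grp (D 3)) (grp E₀) (grp E₁)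
    (grp (Finset.univ : Finset G)) ((D 0).card) ((D 1).card) ((D 2).card) ((D 3).card)
    (Fintype.card G) (hgd (D 0)) (hgd (D 1)) (hgd (D 2)) (hgd (D 3)) hgg hS' h1' h2' h3'
  have PI := congrArg (phi5 G) EI
  have PII := congrArg (phi5 G) EII
  have PIII := congrArg (phi5 G) EIII
  simp only [map_mul, map_add, map_sub, map_one, map_natCast, map_ofNat] at PI PII PIII
  have u11 : U5 G 1 * U5 G 1 = U5 G 2 := by
    rw [U5_mul, show (1+1 : ZMod 5) = 2 from by decide]
  have u12 : U5 G 1 * U5 G 2 = U5 G 3 := by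
    rw [U5_mul, show (1+2 : ZMod 5) = 3 from by decide]
  have u13 : U5 G 1 * U5 G 3 = U5 G 4 := by
    rw [U5_mul, show (1+3 : ZMod 5) = 4 from by decide]
  have u14 : U5 G 1 * U5 G 4 = 1 := by
    rw [U5_mul, show (1+4 : ZMod 5) = 0 from by decide, U5_zero]
  have u22 : U5 G 2 * U5 G 2 = U5 G 4 := by
    rw [U5_mul, show (2+2 : ZMod 5) = 4 from by decide]
  have u23 : U5 G 2 * U5 G 3 = 1 := by
    rw [U5_mul, show (2+3 : ZMod 5) = 0 from by decide, U5_zero]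
  have u24 : U5 G 2 * U5 G 4 = U5 G 1 := by
    rw [U5_mul, show (2+4 : ZMod 5) = 1 from by decide]
  have u33 : U5 G 3 * U5 G 3 = U5 G 1 := by
    rw [U5_mul, show (3+3 : ZMod 5) = 1 from by decide]
  have u34 : U5 G 3 * U5 G 4 = U5 G 2 := by
    rw [U5_mul, show (3+4 : ZMod 5) = 2 from by decide]
  have u44 : U5 G 4 * U5 G 4 = U5 G 3 := by
    rw [U5_mul, show (4+4 : ZMod 5) = 3 from by decide]
  have ASM := assembleR (phi5 G (grp (D 0)))
    (phi5 G (grp (Finset.univ : Finset G)) - phi5 G (grp (D 2)))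
    (phi5 G (grp (Finset.univ : Finset G)) - 1 - phi5 G (grp E₀))
    (phi5 G (grp (D 3)))
    (phi5 G (grp (Finset.univ : Finset G)) - phi5 G (grp (D 1)))
    (phi5 G (grp (Finset.univ : Finset G)) - 1 - phi5 G (grp E₁))
    (phi5 G (grp (Finset.univ : Finset G)) - phi5 G (grp (D 0)))
    (phi5 G (grp (D 2))) (phi5 G (grp E₀))
    (phi5 G (grp (Finset.univ : Finset G)) - phi5 G (grp (D 3)))
    (phi5 G (grp (D 1))) (phi5 G (grp E₁))
    (phi5 G (grp (Finset.univ : Finset G)))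
    ((Fintype.card G : AddMonoidAlgebra ℤ (G × ZMod 5)))
    (U5 G 1) (U5 G 2) (U5 G 3) (U5 G 4)
    u11 u12 u13 u14 u22 u23 u24 u33 u34 u44
    (by linear_combination PI) (by linear_combination PII) (by linear_combination PIII)
  have sum12 : ∑ s ∈ ({1,2} : Finset (ZMod 5)), U5 G s = U5 G 1 + U5 G 2 := by
    rw [Finset.sum_insert (by decide), Finset.sum_singleton]
  have sum34 : ∑ s ∈ ({3,4} : Finset (ZMod 5)), U5 G s = U5 G 3 + U5 G 4 := by
    rw [Finset.sum_insert (by decide), Finset.sum_singleton]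
  have sum24 : ∑ s ∈ ({2,4} : Finset (ZMod 5)), U5 G s = U5 G 2 + U5 G 4 := by
    rw [Finset.sum_insert (by decide), Finset.sum_singleton]
  have sum13 : ∑ s ∈ ({1,3} : Finset (ZMod 5)), U5 G s = U5 G 1 + U5 G 3 := by
    rw [Finset.sum_insert (by decide), Finset.sum_singleton]
  -- block 0
  have nB0 := negSet_block (D 0) (Finset.univ \ D 2) (Gstar G \ E₀)
    ({1,2} : Finset (ZMod 5)) ({3,4} : Finset (ZMod 5)) (hsym' 0) (hnc 2) hns0
  rw [show negSet ({1,2} : Finset (ZMod 5)) = {3,4} from by decide,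
      show negSet ({3,4} : Finset (ZMod 5)) = {1,2} from by decide] at nB0
  have gB0 := grp_block (D 0) (Finset.univ \ D 2) (Gstar G \ E₀)
    ({1,2} : Finset (ZMod 5)) ({3,4} : Finset (ZMod 5)) (by decide) (by decide) (by decide)
  have gN0 := grp_block (D 0) (Finset.univ \ D 2) (Gstar G \ E₀)
    ({3,4} : Finset (ZMod 5)) ({1,2} : Finset (ZMod 5)) (by decide) (by decide) (by decide)
  rw [sum12, sum34, grp_sdiff _ _ (Finset.subset_univ (D 2)), hsd0] at gB0 gN0
  simp only [map_sub, map_one] at gB0 gN0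
  -- block 1
  have nB1 := negSet_block (D 3) (Finset.univ \ D 1) (Gstar G \ E₁)
    ({1,2} : Finset (ZMod 5)) ({3,4} : Finset (ZMod 5)) (hsym' 3) (hnc 1) hns1
  rw [show negSet ({1,2} : Finset (ZMod 5)) = {3,4} from by decide,
      show negSet ({3,4} : Finset (ZMod 5)) = {1,2} from by decide] at nB1
  have gB1 := grp_block (D 3) (Finset.univ \ D 1) (Gstar G \ E₁)
    ({1,2} : Finset (ZMod 5)) ({3,4} : Finset (ZMod 5)) (by decide) (by decide) (by decide)
  have gN1 := grp_block (D 3) (Finset.univ \ D 1) (Gstar G \ E₁)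
    ({3,4} : Finset (ZMod 5)) ({1,2} : Finset (ZMod 5)) (by decide) (by decide) (by decide)
  rw [sum12, sum34, grp_sdiff _ _ (Finset.subset_univ (D 1)), hsd1] at gB1 gN1
  simp only [map_sub, map_one] at gB1 gN1
  -- block 2
  have nB2 := negSet_block (Finset.univ \ D 0) (D 2) E₀
    ({2,4} : Finset (ZMod 5)) ({1,3} : Finset (ZMod 5)) (hnc 0) (hsym' 2) hE₀s'
  rw [show negSet ({2,4} : Finset (ZMod 5)) = {1,3} from by decide,
      show negSet ({1,3} : Finset (ZMod 5)) = {2,4} from by decide] at nB2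
  have gB2 := grp_block (Finset.univ \ D 0) (D 2) E₀
    ({2,4} : Finset (ZMod 5)) ({1,3} : Finset (ZMod 5)) (by decide) (by decide) (by decide)
  have gN2 := grp_block (Finset.univ \ D 0) (D 2) E₀
    ({1,3} : Finset (ZMod 5)) ({2,4} : Finset (ZMod 5)) (by decide) (by decide) (by decide)
  rw [sum24, sum13, grp_sdiff _ _ (Finset.subset_univ (D 0))] at gB2 gN2
  simp only [map_sub, map_one] at gB2 gN2
  -- block 3
  have nB3 := negSet_block (Finset.univ \ D 3) (D 1) E₁
    ({2,4} : Finset (ZMod 5)) ({1,3} : Finset (ZMod 5)) (hnc 3) (hsym' 1) hE₁s'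
  rw [show negSet ({2,4} : Finset (ZMod 5)) = {1,3} from by decide,
      show negSet ({1,3} : Finset (ZMod 5)) = {2,4} from by decide] at nB3
  have gB3 := grp_block (Finset.univ \ D 3) (D 1) E₁
    ({2,4} : Finset (ZMod 5)) ({1,3} : Finset (ZMod 5)) (by decide) (by decide) (by decide)
  have gN3 := grp_block (Finset.univ \ D 3) (D 1) E₁
    ({1,3} : Finset (ZMod 5)) ({2,4} : Finset (ZMod 5)) (by decide) (by decide) (by decide)
  rw [sum24, sum13, grp_sdiff _ _ (Finset.subset_univ (D 3))] at gB3 gN3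
  simp only [map_sub, map_one] at gB3 gN3
  -- universe of the product group
  have hu5 : grp (Finset.univ : Finset (G × ZMod 5)) = phi5 G (grp (Finset.univ : Finset G))
      * (1 + U5 G 1 + U5 G 2 + U5 G 3 + U5 G 4) := by
    rw [← Finset.univ_product_univ, grp_prod,
      show (Finset.univ : Finset (ZMod 5)) = {0,1,2,3,4} from by decide,
      Finset.sum_insert (by decide), Finset.sum_insert (by decide),
      Finset.sum_insert (by decide), Finset.sum_insert (by decide),
      Finset.sum_singleton, U5_zero]
    ring
  have hg5 : grp (Gstar (G × ZMod 5)) = phi5 G (grp (Finset.univ : Finset G))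
      * (1 + U5 G 1 + U5 G 2 + U5 G 3 + U5 G 4) - 1 := by
    rw [Gstar, grp_sdiff _ _ (Finset.singleton_subset_iff.2 (Finset.mem_univ 0)), grp_singleton,
      ← AddMonoidAlgebra.one_def, hu5]
  -- block cardinalities
  have hcard5 : ((Fintype.card (G × ZMod 5) : ℤ)) = 5 * (Fintype.card G : ℤ) := by
    rw [Fintype.card_prod]
    push_cast
    rw [show (Fintype.card (ZMod 5) : ℤ) = 5 from by norm_num [ZMod.card]]
    ring
  have cB0 : (((D 0) ×ˢ ({1, 2} : Finset (ZMod 5)) ∪ ((Finset.univ : Finset G) \ D 2) ×ˢ {3, 4}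
      ∪ (Gstar G \ E₀) ×ˢ {0}).card : ℤ)
      = 2*((D 0).card : ℤ) + 2*((Fintype.card G : ℤ) - ((D 2).card : ℤ))
        + ((Fintype.card G : ℤ) - 1 - (E₀.card : ℤ)) := by
    rw [card_block _ _ _ _ _ (by decide) (by decide) (by decide),
      show (({1,2} : Finset (ZMod 5))).card = 2 from by decide,
      show (({3,4} : Finset (ZMod 5))).card = 2 from by decide]
    push_cast
    rw [card_compl_int, card_Gstar_sdiff_int hE₀]
    ring
  have cB1 : (((D 3) ×ˢ ({1, 2} : Finset (ZMod 5)) ∪ ((Finset.univ : Finset G) \ D 1) ×ˢ {3, 4}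
      ∪ (Gstar G \ E₁) ×ˢ {0}).card : ℤ)
      = 2*((D 3).card : ℤ) + 2*((Fintype.card G : ℤ) - ((D 1).card : ℤ))
        + ((Fintype.card G : ℤ) - 1 - (E₁.card : ℤ)) := by
    rw [card_block _ _ _ _ _ (by decide) (by decide) (by decide),
      show (({1,2} : Finset (ZMod 5))).card = 2 from by decide,
      show (({3,4} : Finset (ZMod 5))).card = 2 from by decide]
    push_cast
    rw [card_compl_int, card_Gstar_sdiff_int hE₁]
    ring
  have cB2 : ((((Finset.univ : Finset G) \ D 0) ×ˢ ({2, 4} : Finset (ZMod 5)) ∪ (D 2) ×ˢ {1, 3}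
      ∪ E₀ ×ˢ {0}).card : ℤ)
      = 2*((Fintype.card G : ℤ) - ((D 0).card : ℤ)) + 2*((D 2).card : ℤ) + (E₀.card : ℤ) := by
    rw [card_block _ _ _ _ _ (by decide) (by decide) (by decide),
      show (({2,4} : Finset (ZMod 5))).card = 2 from by decide,
      show (({1,3} : Finset (ZMod 5))).card = 2 from by decide]
    push_cast
    rw [card_compl_int]
    ring
  have cB3 : ((((Finset.univ : Finset G) \ D 3) ×ˢ ({2, 4} : Finset (ZMod 5)) ∪ (D 1) ×ˢ {1, 3}
      ∪ E₁ ×ˢ {0}).card : ℤ)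
      = 2*((Fintype.card G : ℤ) - ((D 3).card : ℤ)) + 2*((D 1).card : ℤ) + (E₁.card : ℤ) := by
    rw [card_block _ _ _ _ _ (by decide) (by decide) (by decide),
      show (({2,4} : Finset (ZMod 5))).card = 2 from by decide,
      show (({1,3} : Finset (ZMod 5))).card = 2 from by decide]
    push_cast
    rw [card_compl_int]
    ring
  constructor
  · unfold IsTypeH4star
    simp only [Fin.sum_univ_four, Matrix.cons_val_zero, Matrix.cons_val_one, Matrix.head_cons,
      Matrix.cons_val_two, Matrix.tail_cons, Matrix.cons_val_three]
    rw [nB0, nB1, nB2, nB3, gB0, gN0, gB1, gN1, gB2, gN2, gB3, gN3,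
      cB0, cB1, cB2, cB3, hcard5, hu5, ← AddMonoidAlgebra.one_def]
    simp only [zsmul_eq_mul]
    push_cast
    linear_combination ASM
  · simp only [Fin.sum_univ_four, Matrix.cons_val_zero, Matrix.cons_val_one, Matrix.head_cons,
      Matrix.cons_val_two, Matrix.tail_cons, Matrix.cons_val_three]
    rw [nB0, nB1, nB2, nB3, gB0, gN0, gB1, gN1, gB2, gN2, gB3, gN3, hg5,
      ← AddMonoidAlgebra.one_def]
    simp only [zsmul_eq_mul]
    push_cast
    linear_combination ASM
end

section
/- Let D = {D_0,D_1,D_2,D_3} be a symmetric difference family of type H in a finite abelian group G of order v satisfying conditions (i) and (ii): each |D_i| = (v − √v)/2, and for every nontrivial character ψ of G exactly one of ψ(D_0),...,ψ(D_3) is nonzero and that value is ±√v. Then D satisfies (d3): 2(D_0·D_2 + D_1·D_3) = (√v − 1)²·G = (Σ|D_i| − v + 1)·G in ℤ[G] (here v is a perfect square). -/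
open Finset

noncomputable section CharAux

variable {G : Type*} [AddCommGroup G] [Fintype G] [DecidableEq G]

/-- Evaluation of an element of `ℤ[G]` under a complex character. -/
def charVal (ψ : AddChar G ℂ) (f : AddMonoidAlgebra ℤ G) : ℂ :=
  ∑ x : G, (f.coeff x : ℂ) * ψ x

lemma charVal_add (ψ : AddChar G ℂ) (f g : AddMonoidAlgebra ℤ G) :
    charVal ψ (f + g) = charVal ψ f + charVal ψ g := by
  unfold charVal
  rw [← Finset.sum_add_distrib]
  refine Finset.sum_congr rfl fun x _ => ?_
  have : (f + g).coeff x = f.coeff x + g.coeff x := rfl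
  rw [this]; push_cast; ring

/-- `charVal` as an additive monoid hom. -/
def charValHom (ψ : AddChar G ℂ) : AddMonoidAlgebra ℤ G →+ ℂ where
  toFun := charVal ψ
  map_zero' := by simp [charVal]
  map_add' := charVal_add ψ

lemma charVal_smul (ψ : AddChar G ℂ) (c : ℤ) (f : AddMonoidAlgebra ℤ G) :
    charVal ψ (c • f) = (c : ℂ) * charVal ψ f := by
  unfold charVal
  rw [Finset.mul_sum]
  refine Finset.sum_congr rfl fun x _ => ?_
  have : (c • f).coeff x = c * f.coeff x := rfl
  rw [this]; push_cast; ring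

lemma charVal_single (ψ : AddChar G ℂ) (a : G) (c : ℤ) :
    charVal ψ (AddMonoidAlgebra.single a c) = (c : ℂ) * ψ a := by
  unfold charVal
  rw [Finset.sum_eq_single a]
  · simp
  · intro b _ hb
    have : (AddMonoidAlgebra.single a c : AddMonoidAlgebra ℤ G).coeff b = 0 :=
      Finsupp.single_eq_of_ne' (Ne.symm hb)
    rw [this]; simp
  · simp

lemma charVal_grp (ψ : AddChar G ℂ) (A : Finset G) :
    charVal ψ (grp A) = ∑ a ∈ A, ψ a := by
  show charValHom ψ (grp A) = _
  unfold grp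
  rw [map_sum]
  refine Finset.sum_congr rfl fun a _ => ?_
  show charVal ψ (AddMonoidAlgebra.single a 1) = ψ a
  rw [charVal_single]; simp

lemma charVal_grp_mul (ψ : AddChar G ℂ) (A B : Finset G) :
    charVal ψ (grp A * grp B) = (∑ a ∈ A, ψ a) * (∑ b ∈ B, ψ b) := by
  have h : grp A * grp B = ∑ a ∈ A, ∑ b ∈ B,
      (AddMonoidAlgebra.single (a + b) 1 : AddMonoidAlgebra ℤ G) := by
    unfold grp
    rw [Finset.sum_mul_sum]
    refine Finset.sum_congr rfl fun a _ => Finset.sum_congr rfl fun b _ => ?_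
    rw [AddMonoidAlgebra.single_mul_single, one_mul]
  rw [h]
  rw [show charVal ψ (∑ a ∈ A, ∑ b ∈ B,
      (AddMonoidAlgebra.single (a + b) 1 : AddMonoidAlgebra ℤ G)) =
      charValHom ψ _ from rfl, map_sum, Finset.sum_mul_sum]
  refine Finset.sum_congr rfl fun a _ => ?_
  rw [map_sum]
  refine Finset.sum_congr rfl fun b _ => ?_
  show charVal ψ (AddMonoidAlgebra.single (a + b) 1) = ψ a * ψ b
  rw [charVal_single, AddChar.map_add_eq_mul]; simp

/-- Fourier inversion: an element of `ℤ[G]` all of whose character values vanish is zero. -/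
lemma charVal_inj (f g : AddMonoidAlgebra ℤ G)
    (h : ∀ ψ : AddChar G ℂ, charVal ψ f = charVal ψ g) : f = g := by
  have key : ∀ (h : AddMonoidAlgebra ℤ G), (∀ ψ : AddChar G ℂ, charVal ψ h = 0) → h = 0 := by
    intro u hu
    have hb : ∀ b : G, u.coeff b = 0 := by
      intro b
      have h1 : ∑ ψ : AddChar G ℂ, ψ (-b) * charVal ψ u = 0 := by
        simp [hu]
      have h2 : ∑ ψ : AddChar G ℂ, ψ (-b) * charVal ψ u
          = (u.coeff b : ℂ) * (Fintype.card G : ℂ) := by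
        unfold charVal
        calc ∑ ψ : AddChar G ℂ, ψ (-b) * ∑ x : G, (u.coeff x : ℂ) * ψ x
            = ∑ ψ : AddChar G ℂ, ∑ x : G, (u.coeff x : ℂ) * ψ (x + -b) := by
              refine Finset.sum_congr rfl fun ψ _ => ?_
              rw [Finset.mul_sum]
              refine Finset.sum_congr rfl fun x _ => ?_
              rw [AddChar.map_add_eq_mul]; ring
          _ = ∑ x : G, (u.coeff x : ℂ) * ∑ ψ : AddChar G ℂ, ψ (x + -b) := by
              rw [Finset.sum_comm]
              exact Finset.sum_congr rfl fun x _ => (Finset.mul_sum _ _ _).symm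
          _ = ∑ x : G, (u.coeff x : ℂ) * (if x + -b = 0 then (Fintype.card G : ℂ) else 0) := by
              refine Finset.sum_congr rfl fun x _ => ?_
              rw [AddChar.sum_apply_eq_ite]
          _ = (u.coeff b : ℂ) * (Fintype.card G : ℂ) := by
              rw [Finset.sum_eq_single b]
              · simp
              · intro x _ hx
                have : ¬ (x + -b = 0) := by
                  intro hc; exact hx (by linear_combination (norm := abel) hc)
                simp [this]
              · simp
      rw [h2] at h1
      have hcard : (Fintype.card G : ℂ) ≠ 0 := by
        exact_mod_cast Nat.cast_ne_zero.2 Fintype.card_ne_zero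
      have := mul_eq_zero.1 h1
      rcases this with h' | h'
      · exact_mod_cast h'
      · exact absurd h' hcard
    ext b
    exact hb b
  have := key (f - g) (fun ψ => by
    have h2 := charVal_add ψ (f - g) g
    rw [sub_add_cancel] at h2
    rw [eq_sub_of_add_eq h2.symm, h, sub_self])
  have := sub_eq_zero.1 this
  exact this

end CharAux

/-- a symmetric type-`H` family satisfying conditions (i) and (ii)
(character conditions) satisfies (d3). -/
theorem d3_from_character_conditions {G : Type*} [AddCommGroup G] [Fintype G]
    [DecidableEq G] (D : Fin 4 → Finset G) (n : ℕ) (hv : Fintype.card G = n ^ 2)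
    (hsym : ∀ i, IsSymmetric (D i)) (hH : IsTypeH D)
    (hi : ∀ i, 2 * (D i).card = Fintype.card G - n)
    (hii : ∀ ψ : AddChar G ℂ, ψ ≠ 1 →
      (∃! i, (∑ x ∈ D i, ψ x) ≠ 0) ∧
      (∀ i, (∑ x ∈ D i, ψ x) = 0 ∨ (∑ x ∈ D i, ψ x) = (n : ℂ) ∨
        (∑ x ∈ D i, ψ x) = -(n : ℂ))) :
    (2 : ℤ) • (grp (D 0) * grp (D 2) + grp (D 1) * grp (D 3)) =
        (((n : ℤ) - 1) ^ 2) • grp (Finset.univ : Finset G) ∧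
      (2 : ℤ) • (grp (D 0) * grp (D 2) + grp (D 1) * grp (D 3)) =
        ((∑ i, ((D i).card : ℤ)) - (Fintype.card G : ℤ) + 1) •
          grp (Finset.univ : Finset G) := by
  -- basic numerics
  have hn0 : n ≠ 0 := by
    rintro rfl
    have := Fintype.card_ne_zero (α := G)
    simp [hv] at this
  have hle : n ≤ Fintype.card G := by
    rw [hv, sq]
    exact Nat.le_mul_of_pos_left n (Nat.pos_of_ne_zero hn0)
  have hiz : ∀ i, (2 : ℤ) * ((D i).card : ℤ) = (n : ℤ) ^ 2 - n := by
    intro i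
    have h0 := hi i
    have h' : ((2 * (D i).card : ℕ) : ℤ) = ((Fintype.card G - n : ℕ) : ℤ) := by rw [h0]
    rw [Nat.cast_sub hle, hv] at h'
    push_cast at h' ⊢
    linarith
  -- the first identity via characters
  have main : (2 : ℤ) • (grp (D 0) * grp (D 2) + grp (D 1) * grp (D 3)) =
      (((n : ℤ) - 1) ^ 2) • grp (Finset.univ : Finset G) := by
    apply charVal_inj
    intro ψ
    rw [charVal_smul, charVal_smul, charVal_add, charVal_grp_mul, charVal_grp_mul,
      charVal_grp]
    by_cases hψ : ψ = 1
    · subst hψ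
      simp only [AddChar.one_apply, Finset.sum_const, nsmul_eq_mul, mul_one,
        Finset.card_univ]
      have e : ∀ i, (2 : ℂ) * ((D i).card : ℂ) = (n : ℂ) ^ 2 - n := by
        intro i
        exact_mod_cast congrArg (fun z : ℤ => (z : ℂ)) (hiz i)
      have e0 := e 0; have e1 := e 1; have e2 := e 2; have e3 := e 3
      rw [hv]
      push_cast
      linear_combination ((D 2).card : ℂ) * e0 + (((n:ℂ)^2 - n)/2) * e2
        + ((D 3).card : ℂ) * e1 + (((n:ℂ)^2 - n)/2) * e3
    · obtain ⟨hex, -⟩ := hii ψ hψ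
      obtain ⟨i, hi', hiu⟩ := hex
      have hzero : ∀ j k : Fin 4, j ≠ k →
          (∑ x ∈ D j, ψ x) * (∑ x ∈ D k, ψ x) = 0 := by
        intro j k hjk
        by_cases hj : (∑ x ∈ D j, ψ x) = 0
        · rw [hj, zero_mul]
        by_cases hk : (∑ x ∈ D k, ψ x) = 0
        · rw [hk, mul_zero]
        exact absurd ((hiu j hj).trans (hiu k hk).symm) hjk
      have hsum : (∑ x : G, ψ x) = 0 := by
        apply AddChar.sum_eq_zero_iff_ne_zero.2
        intro h0
        exact hψ (by rw [h0]; rfl)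
      rw [hzero 0 2 (by decide), hzero 1 3 (by decide), hsum]
      ring
  refine ⟨main, ?_⟩
  have hcoeff : ((∑ i, ((D i).card : ℤ)) - (Fintype.card G : ℤ) + 1) = ((n : ℤ) - 1) ^ 2 := by
    have h0 := hiz 0; have h1 := hiz 1; have h2 := hiz 2; have h3 := hiz 3
    rw [Fin.sum_univ_four, hv]
    push_cast
    ring_nf
    ring_nf at h0 h1 h2 h3
    linarith
  rw [hcoeff]
  exact main
end
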